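/- Let l ≥ 1 (q = p^l), let s = (s_1,…,s_d) be an index with d ≥ 1, and let u = (u_1,…,u_d) ∈ Kbar[t]^d satisfy ‖u_k‖∞ < |θ|∞^{s_k·q/(q−1)} for all k, so that the polylogarithm series below lie in the Tate algebra T. Then the following identity holds in L, the fraction field of T: L_{l,u,s}^(−l)(t) = u_d^(−l)·L_{l,(u_1,…,u_{d−1}),(s_1,…,s_{d−1})}(t) / (t − θ)^{s_1+⋯+s_{d−1}} + L_{l,u,s}(t) / (t − θ)^{s_1+⋯+s_d}, where for d = 1 the polylogarithm with empty data is interpreted as 1. -/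

import Mathlib

/-!
Shared setup.  The field `C` plays the role of `ℂ_∞`: the completion of a fixed
algebraic closure of `𝔽_p((1/θ))`, an algebraically closed, perfect, complete
nonarchimedean valued field of characteristic `p`.  It is axiomatized by its
characterizing properties: an algebraically closed perfect field `C` of
characteristic `p` together with a nonarchimedean absolute value `abv` for which `C`
is complete and with a distinguished element `θ` satisfying `abv θ = p` (the latter
hypotheses appear explicitly in the theorems below).
-/

namespace Carlitz

noncomputable section

open Filter Polynomial

variable (C : Type) [Field C] (p : ℕ) [Fact p.Prime] [CharP C p]

/-- The finite subfield `𝔽_{p^l}` of `C`: the fixed points of the `l`-th iterate of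
the Frobenius. -/
def Fq (l : ℕ) : Subfield C where
  carrier := {x : C | x ^ p ^ l = x}
  mul_mem' := by
    intro a b ha hb
    simp only [Set.mem_setOf_eq] at *
    rw [mul_pow, ha, hb]
  one_mem' := by simp
  add_mem' := by
    intro a b ha hb
    simp only [Set.mem_setOf_eq] at *
    have h := map_add (iterateFrobenius C p l) a b
    simp only [iterateFrobenius_def] at h
    rw [h, ha, hb]
  zero_mem' := by
    simp only [Set.mem_setOf_eq]
    exact zero_pow (pow_pos (Nat.Prime.pos Fact.out) l).ne'
  neg_mem' := by
    intro a ha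
    simp only [Set.mem_setOf_eq] at *
    have h := map_neg (iterateFrobenius C p l) a
    simp only [iterateFrobenius_def] at h
    rw [h, ha]
  inv_mem' := by
    intro a ha
    simp only [Set.mem_setOf_eq] at *
    rw [inv_pow, ha]

variable {C}

section Abv

variable (abv : AbsoluteValue C ℝ)

/-- `abv` is nonarchimedean. -/
def IsNonarch : Prop := ∀ x y : C, abv (x + y) ≤ max (abv x) (abv y)

/-- Convergence of a sequence with respect to `abv`. -/
def TendstoAbv (f : ℕ → C) (x : C) : Prop :=
  ∀ ε : ℝ, 0 < ε → ∃ N : ℕ, ∀ n, N ≤ n → abv (f n - x) < ε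

/-- Unconditional summability of a family with respect to `abv`, with sum `S`. -/
def HasAbvSum {ι : Type} (f : ι → C) (S : C) : Prop :=
  ∀ ε : ℝ, 0 < ε → ∃ F : Finset ι, ∀ G : Finset ι, F ⊆ G → abv ((∑ i ∈ G, f i) - S) < ε

/-- `C` is complete with respect to `abv`. -/
def AbvComplete : Prop :=
  ∀ f : ℕ → C, (∀ ε : ℝ, 0 < ε → ∃ N : ℕ, ∀ m, N ≤ m → ∀ n, N ≤ n → abv (f m - f n) < ε) →
    ∃ x : C, TendstoAbv abv f x

end Abv

/-- The rational function field `K = 𝔽_p(θ)`: the subfield of `C` generated by `θ`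
(it automatically contains the prime field `𝔽_p`). -/
def Kzero (θ : C) : Subfield C := Subfield.closure {θ}

/-- `K̄`: the algebraic closure of `K = 𝔽_p(θ)` inside `C`, i.e. the subfield of all
elements of `C` that are algebraic over `K`. -/
def Kbar (θ : C) : Subfield C :=
  Subfield.closure {x : C | IsAlgebraic (Kzero θ) x}

/-- The transcendence degree, over a subfield `K` of `C`, of the subfield of `C`
generated by `K` and a set `S`: the supremum of the cardinalities of its finite
subsets that are algebraically independent over `K`. -/
def trdegOver (K : Subfield C) (S : Set C) : ℕ :=
  sSup {n : ℕ | ∃ T : Finset C, ↑T ⊆ (Subfield.closure ((K : Set C) ∪ S) : Set C) ∧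
    T.card = n ∧ AlgebraicIndependent K (fun x : (T : Set C) => (x : C))}

/-- An index `(s_1, …, s_d)`: a nonempty finite tuple of positive integers, encoded
as a (nonempty) list. -/
abbrev Index : Type := List ℕ+

/-- `Sub`-closedness of a finite set of indices: membership is closed under passing to
nonempty contiguous subtuples (`Sub(𝐬) = {(s_i, …, s_j) | 1 ≤ i ≤ j ≤ d}`). -/
def SubClosed (I : Finset Index) : Prop :=
  ∀ s ∈ I, ∀ t : Index, t <:+: s → t ≠ [] → t ∈ I

/-- One term `a_1^{-s_1} ⋯ a_d^{-s_d}` of a multiple zeta value, the monic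
polynomials `a_i ∈ 𝔽_{p^l}[θ]` being evaluated at `θ ∈ C`. -/
def mzvTerm (θ : C) (l : ℕ) (s : Index) (a : Fin s.length → Polynomial (Fq C p l)) : C :=
  ∏ i, (Polynomial.eval₂ (Fq C p l).subtype θ (a i) ^ (s.get i : ℕ))⁻¹

/-- The tuples `(a_1, …, a_d)` of monic polynomials in `𝔽_{p^l}[θ]` with
`deg a_1 > ⋯ > deg a_d ≥ 0`. -/
def MZVTuples (l d : ℕ) : Type :=
  {a : Fin d → Polynomial (Fq C p l) // (∀ i, (a i).Monic) ∧
    StrictAnti fun i => (a i).natDegree}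

/-- `z` is the multiple zeta value `ζ_l(s_1, …, s_d)`: the (unconditional) sum of the
family of terms `a_1^{-s_1} ⋯ a_d^{-s_d}` over all tuples of monic polynomials in
`𝔽_{p^l}[θ]` with strictly decreasing degrees. -/
def IsMZV (abv : AbsoluteValue C ℝ) (θ : C) (l : ℕ) (s : Index) (z : C) : Prop :=
  HasAbvSum abv (fun a : MZVTuples (C := C) p l s.length => mzvTerm p θ l s a.1) z

/-- The partial products of the infinite product defining `Ω_l`, evaluated at `t = θ`;
`β` is the fixed `(q-1)`-st root of `-θ`, so that `(-θ)^{-q/(q-1)} = (β^q)⁻¹`. -/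
def omegaAtThetaPartial (θ : C) (l : ℕ) (β : C) (N : ℕ) : C :=
  (β ^ p ^ l)⁻¹ * ∏ i ∈ Finset.range N, (1 - θ * (θ ^ (p ^ l) ^ (i + 1))⁻¹)

/-- `w` is the value `Ω_l(θ)`: the limit of the partial products of the infinite
product defining `Ω_l`, evaluated at `t = θ`. -/
def IsOmegaAtTheta (abv : AbsoluteValue C ℝ) (θ : C) (l : ℕ) (β : C) (w : C) : Prop :=
  TendstoAbv abv (omegaAtThetaPartial p θ l β) w

/-- `π` is the Carlitz period `π̃_l = Ω_l(θ)⁻¹` (for a choice of `(q-1)`-st root `β`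
of `-θ`). -/
def IsCarlitzPeriod (abv : AbsoluteValue C ℝ) (θ : C) (l : ℕ) (π : C) : Prop :=
  ∃ β w : C, β ^ (p ^ l - 1) = -θ ∧ IsOmegaAtTheta p abv θ l β w ∧ w ≠ 0 ∧ π = w⁻¹

/-- Membership in the Laurent series subfield `𝔽_{p^l}((1/θ)) ⊆ C`: `x` is a
convergent sum `∑_{i ≤ N} c_i θ^i` with coefficients `c_i ∈ 𝔽_{p^l}`. -/
def InLaurentField (abv : AbsoluteValue C ℝ) (θ : C) (l : ℕ) (x : C) : Prop :=
  ∃ (N : ℤ) (c : ℤ → C), (∀ i, c i ∈ Fq C p l) ∧ (∀ i : ℤ, N < i → c i = 0) ∧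
    HasAbvSum abv (fun i : ℤ => c i * θ ^ i) x

section Twist

variable [PerfectRing C p]

/-- The `n`-fold twist on elements of `C`: `x ↦ x^{p^n}` for `n ∈ ℤ` (using
perfectness for negative `n`). -/
def twistHom (n : ℤ) : C →+* C := ((frobeniusEquiv C p ^ n : C ≃+* C) : C →+* C)

/-- The `n`-fold twist `f ↦ f^{(n)}` on power series:
`(∑ a_i t^i)^{(n)} = ∑ a_i^{p^n} t^i`. -/
def twistPS (n : ℤ) : PowerSeries C →+* PowerSeries C := PowerSeries.map (twistHom p n)

/-- The `n`-fold twist on polynomials. -/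
def twistPoly (n : ℤ) : Polynomial C →+* Polynomial C := Polynomial.mapRingHom (twistHom p n)

/-- The `n`-fold twist on formal Laurent series. -/
def twistLS (n : ℤ) (f : LaurentSeries C) : LaurentSeries C := f.map (twistHom p n)

end Twist

/-- The `N`-th partial product of the infinite product defining `Ω_l`, as a power
series; `β` is the fixed `(q-1)`-st root of `-θ`, so `(-θ)^{-q/(q-1)} = (β^q)⁻¹`. -/
def omegaPartial (θ : C) (l : ℕ) (β : C) (N : ℕ) : PowerSeries C :=
  PowerSeries.C (β ^ p ^ l)⁻¹ *
    ∏ i ∈ Finset.range N, (1 - PowerSeries.C (θ ^ (p ^ l) ^ (i + 1))⁻¹ * PowerSeries.X)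

/-- `Ω` is the power series `Ω_l(t) ∈ C[[t]]`: the infinite product converges
coefficientwise to `Ω`. -/
def IsOmega (abv : AbsoluteValue C ℝ) (θ : C) (l : ℕ) (β : C) (Ω : PowerSeries C) : Prop :=
  ∀ n : ℕ, ∀ ε : ℝ, 0 < ε → ∃ M : ℕ, ∀ N, M ≤ N →
    abv (PowerSeries.coeff n (omegaPartial p θ l β N) - PowerSeries.coeff n Ω) < ε

/-- `x` is the value `f(θ)` of a power series `f` at `t = θ` (a convergent sum in `C`). -/
def EvalAtTheta (abv : AbsoluteValue C ℝ) (θ : C) (f : PowerSeries C) (x : C) : Prop :=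
  HasAbvSum abv (fun n : ℕ => PowerSeries.coeff n f * θ ^ n) x

/-- Membership in the Tate algebra `𝕋 ⊆ C[[t]]`: the coefficients tend to `0`. -/
def InTate (abv : AbsoluteValue C ℝ) (f : PowerSeries C) : Prop :=
  Tendsto (fun n : ℕ => abv (PowerSeries.coeff n f)) atTop (nhds 0)

/-- Summability of a family of power series with respect to the Gauss sup-norm of the
Tate algebra, with sum `S`. -/
def HasSumTate (abv : AbsoluteValue C ℝ) {ι : Type} (f : ι → PowerSeries C)
    (S : PowerSeries C) : Prop :=
  ∀ ε : ℝ, 0 < ε → ∃ F : Finset ι, ∀ G : Finset ι, F ⊆ G → ∀ n : ℕ,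
    abv (PowerSeries.coeff n ((∑ i ∈ G, f i) - S)) < ε

/-- The subfield `L₂` is spanned over the subfield `L₁` by finitely many elements,
i.e. `L₂` is a finite extension of `L₁`. -/
def SpansFinitelyOver (L₁ L₂ : Subfield C) : Prop :=
  ∃ s : Finset C, ↑s ⊆ (L₂ : Set C) ∧
    ∀ x ∈ L₂, ∃ c : C → C, (∀ y, c y ∈ L₁) ∧ x = ∑ y ∈ s, c y * y

/-- The subfield `K_∞ = 𝔽_p((1/θ))` of `C`. -/
def Kinfty (abv : AbsoluteValue C ℝ) (θ : C) : Subfield C :=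
  Subfield.closure {x : C | InLaurentField p abv θ 1 x}

/-- A power series `∑ a_i t^i ∈ C[[t]]` is entire: `|a_i|^{1/i} → 0` and the
coefficients generate a finite field extension of `𝔽_p((1/θ))`. -/
def IsEntire (abv : AbsoluteValue C ℝ) (θ : C) (f : PowerSeries C) : Prop :=
  Tendsto (fun n : ℕ => abv (PowerSeries.coeff n f) ^ ((1 : ℝ) / n)) atTop (nhds 0) ∧
    SpansFinitelyOver (Kinfty p abv θ)
      (Subfield.closure ({x : C | InLaurentField p abv θ 1 x} ∪
        Set.range fun n : ℕ => PowerSeries.coeff n f))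

/-- Strictly decreasing tuples `i_1 > i_2 > ⋯ > i_d ≥ 0` of natural numbers. -/
def DecTuples (d : ℕ) : Type := {i : Fin d → ℕ // StrictAnti i}

section Polylog

variable [PerfectRing C p]

/-- One term of the `t`-motivic Carlitz multiple polylogarithm `L_{l,u,s}`, as a
power series (the factors `1/(t - θ^{q^k})` are expanded as power series on the
closed unit disk, i.e. inverted in `C[[t]]`). -/
def polylogTerm (θ : C) (l : ℕ) {d : ℕ} (s : Fin d → ℕ+) (u : Fin d → Polynomial C)
    (i : DecTuples d) : PowerSeries C :=
  (∏ k, (((u k).map (iterateFrobenius C p (i.1 k * l)) : Polynomial C) : PowerSeries C)) *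
    ((∏ k, (∏ j ∈ Finset.Icc 1 (i.1 k),
      (PowerSeries.X - PowerSeries.C (θ ^ (p ^ l) ^ j))) ^ (s k : ℕ)))⁻¹

/-- `Lser` is the `t`-motivic Carlitz multiple polylogarithm `L_{l,u,s}(t)`: the sum,
in the Tate algebra, of the family of its terms. -/
def IsPolylog (abv : AbsoluteValue C ℝ) (θ : C) (l : ℕ) {d : ℕ} (s : Fin d → ℕ+)
    (u : Fin d → Polynomial C) (Lser : PowerSeries C) : Prop :=
  HasSumTate abv (polylogTerm p θ l s u) Lser

/-- One term of the Carlitz multiple polylogarithm series, evaluated at `t = θ`. -/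
def polylogTermAtTheta (θ : C) (l : ℕ) {d : ℕ} (s : Fin d → ℕ+) (u : Fin d → Polynomial C)
    (i : DecTuples d) : C :=
  (∏ k, Polynomial.eval θ ((u k).map (iterateFrobenius C p (i.1 k * l)))) *
    ((∏ k, (∏ j ∈ Finset.Icc 1 (i.1 k), (θ - θ ^ (p ^ l) ^ j)) ^ (s k : ℕ)))⁻¹

end Polylog

/-- The Gauss-norm bound `‖u‖_∞ < |θ|_∞^{s·q/(q-1)}` (with `q = p^l`): every
coefficient of `u` has absolute value `< abv θ ^ (s·q/(q-1))`. -/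
def GaussBound (abv : AbsoluteValue C ℝ) (θ : C) (l : ℕ) (sk : ℕ) (u : Polynomial C) : Prop :=
  ∀ i : ℕ, abv (u.coeff i) < abv θ ^ (((sk : ℝ) * (p : ℝ) ^ l) / ((p : ℝ) ^ l - 1))

/-- All coefficients of the polynomial `u` lie in the subfield `K`. -/
def CoeffsIn (K : Subfield C) (u : Polynomial C) : Prop := ∀ i : ℕ, u.coeff i ∈ K

variable (C)

/-- For `l ≥ 1` the subfield `𝔽_{p^l} ⊆ C` is finite (it consists of roots of
`X^{p^l} - X`). -/
def fqFintype (l : ℕ) (hl : 0 < l) : Fintype (Fq C p l) := by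
  have hp1 : 1 < p ^ l := Nat.one_lt_pow hl.ne' (Nat.Prime.one_lt Fact.out)
  have hne : (Polynomial.X ^ p ^ l - Polynomial.X : Polynomial C) ≠ 0 := by
    intro h
    have h2 : (Polynomial.X ^ p ^ l : Polynomial C) = Polynomial.X := by
      rwa [sub_eq_zero] at h
    have h3 := congrArg Polynomial.natDegree h2
    rw [Polynomial.natDegree_X_pow, Polynomial.natDegree_X] at h3
    omega
  have hfin : ({x : C | x ^ p ^ l = x}).Finite := by
    refine (Polynomial.finite_setOf_isRoot hne).subset ?_
    intro x hx
    simp only [Set.mem_setOf_eq, Polynomial.IsRoot, Polynomial.eval_sub,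
      Polynomial.eval_pow, Polynomial.eval_X] at *
    rw [hx, sub_self]
  have hfin2 : ((Fq C p l : Set C)).Finite := hfin
  exact hfin2.fintype

/-- `D_i ∈ 𝔽_q[θ]`: the product of all monic polynomials of degree `i` over
`𝔽_q = 𝔽_{p^l}`, written as the product over all choices of the `i` lower
coefficients.  The indeterminate of `Polynomial (Fq C p l)` plays the role of `θ`. -/
def Dpoly (l : ℕ) (hl : 0 < l) (i : ℕ) : Polynomial (Fq C p l) :=
  letI := fqFintype C p l hl
  ∏ c : Fin i → Fq C p l,
    (Polynomial.X ^ i + ∑ j : Fin i, Polynomial.C (c j) * Polynomial.X ^ (j : ℕ))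

/-- The Carlitz factorial `Γ_{m+1} = ∏_i D_i^{m_{(i)}} ∈ 𝔽_q[θ]`, where
`m = ∑_i m_{(i)} q^i` is the `q`-adic expansion of `m`. -/
def gammaFact (l : ℕ) (hl : 0 < l) (m : ℕ) : Polynomial (Fq C p l) :=
  ∏ i ∈ Finset.range ((Nat.digits (p ^ l) m).length),
    Dpoly C p l hl i ^ ((Nat.digits (p ^ l) m).getD i 0)

/-- The ring `𝔽_q[θ][t]`: polynomials in `t` (the outer variable) over `𝔽_q[θ]`
(inner variable `θ`). -/
abbrev ATRing (l : ℕ) : Type := Polynomial (Polynomial (Fq C p l))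

/-- The fraction field `𝔽_q(θ, t)`. -/
abbrev ATField (l : ℕ) : Type := FractionRing (ATRing C p l)

/-- The coefficient `∏_{j=1}^{i}(t^{q^i} - θ^{q^j}) / ∏_{j=0}^{i-1}(t^{q^i} - t^{q^j})`
of `x^{q^i}` in the Anderson–Thakur generating series. -/
def atG (l : ℕ) (i : ℕ) : ATField C p l :=
  algebraMap (ATRing C p l) (ATField C p l)
      (∏ j ∈ Finset.Icc 1 i,
        (Polynomial.X ^ (p ^ l) ^ i - Polynomial.C Polynomial.X ^ (p ^ l) ^ j)) /
    algebraMap (ATRing C p l) (ATField C p l)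
      (∏ j ∈ Finset.range i, (Polynomial.X ^ (p ^ l) ^ i - Polynomial.X ^ (p ^ l) ^ j))

open scoped Classical in
/-- The series `1 - ∑_{i ≥ 0} [∏_{j=1}^{i}(t^{q^i} - θ^{q^j}) / ∏_{j=0}^{i-1}(t^{q^i} - t^{q^j})] x^{q^i}`,
a power series in `x` over `𝔽_q(θ, t)`. -/
def atBase (l : ℕ) : PowerSeries (ATField C p l) :=
  PowerSeries.mk fun k =>
    if k = 0 then 1
    else if h : ∃ i : ℕ, k = (p ^ l) ^ i then -(atG C p l (Nat.find h)) else 0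

/-- The Carlitz factorial `Γ_{m+1}|_{θ = t}`, i.e. with `θ` replaced by `t`, as an
element of `𝔽_q[θ][t]`. -/
def gammaAtT (l : ℕ) (hl : 0 < l) (m : ℕ) : ATRing C p l :=
  Polynomial.eval₂ ((Polynomial.C).comp (Polynomial.C)) Polynomial.X (gammaFact C p l hl m)

/-- `H : ℕ → 𝔽_q[θ][t]` is the family of Anderson–Thakur polynomials `(H_{l,s})_{s≥0}`:
it satisfies the generating identity
`(1 - ∑_{i≥0} [⋯] x^{q^i})⁻¹ = ∑_{s≥0} (H_s(t) / Γ_{s+1}|_{θ=t}) x^s`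
of power series in `x` over `𝔽_q(θ, t)`. -/
def IsATFamily (l : ℕ) (hl : 0 < l) (H : ℕ → ATRing C p l) : Prop :=
  (atBase C p l)⁻¹ =
    PowerSeries.mk fun s =>
      algebraMap (ATRing C p l) (ATField C p l) (H s) /
        algebraMap (ATRing C p l) (ATField C p l) (gammaAtT C p l hl s)

/-- The image in `C[t]` of `g(θ, t) ∈ 𝔽_q[θ][t]`, evaluating the variable `θ` at the
distinguished element `θ ∈ C`. -/
def toPolyC (θ : C) (l : ℕ) (g : ATRing C p l) : Polynomial C :=
  g.map (Polynomial.eval₂RingHom (Fq C p l).subtype θ)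

variable {C}

/-- The contiguous subtuple `(s_k, s_{k+1}, …, s_{j-1})` (0-based) of a tuple `s` of
length `d`, for `j ≤ d`. -/
def subTuple {α : Type} {d : ℕ} (s : Fin d → α) (k j : ℕ) (hj : j ≤ d) :
    Fin (j - k) → α :=
  fun m => s ⟨k + (m : ℕ), by have h := m.isLt; omega⟩

/-- The weight `s_k + s_{k+1} + ⋯ + s_{d-1}` (0-based) of the tail of an index. -/
def wtFrom {d : ℕ} (s : Fin d → ℕ+) (k : ℕ) : ℕ :=
  ∑ m : Fin d, if k ≤ (m : ℕ) then (s m : ℕ) else 0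

end

end Carlitz

namespace Carlitz

noncomputable section

open Filter Polynomial


section Aux

open Filter Polynomial

variable {C : Type} [Field C] {p : ℕ} [Fact p.Prime] [CharP C p]

theorem abv_sum_le (abv : AbsoluteValue C ℝ) (hna : IsNonarch abv) {ι : Type*}
    (t : Finset ι) (f : ι → C) (M : ℝ) (hM : 0 ≤ M) (h : ∀ i ∈ t, abv (f i) ≤ M) :
    abv (∑ i ∈ t, f i) ≤ M := by
  classical
  induction t using Finset.induction with
  | empty => simpa using hM
  | @insert a tt hx ih =>
    rw [Finset.sum_insert hx]
    refine le_trans (hna _ _) (max_le (h a (Finset.mem_insert_self _ _)) ?_)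
    exact ih fun i hi => h i (Finset.mem_insert_of_mem hi)

theorem abv_eq_zero_of_forall_lt (abv : AbsoluteValue C ℝ) {x : C}
    (h : ∀ ε : ℝ, 0 < ε → abv x < ε) : x = 0 := by
  by_contra hx
  exact absurd (h (abv x) (abv.pos hx)) (lt_irrefl _)

theorem hasSumTate_unique (abv : AbsoluteValue C ℝ) (hna : IsNonarch abv) {ι : Type}
    {f : ι → PowerSeries C} {S S' : PowerSeries C}
    (h : HasSumTate abv f S) (h' : HasSumTate abv f S') : S = S' := by
  classical
  ext n
  rw [← sub_eq_zero, ← map_sub]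
  refine abv_eq_zero_of_forall_lt abv fun ε hε => ?_
  obtain ⟨F, hF⟩ := h ε hε
  obtain ⟨F', hF'⟩ := h' ε hε
  have h1 := hF (F ∪ F') Finset.subset_union_left n
  have h2 := hF' (F ∪ F') Finset.subset_union_right n
  have key : PowerSeries.coeff n (S - S') =
      PowerSeries.coeff n ((∑ i ∈ F ∪ F', f i) - S') -
        PowerSeries.coeff n ((∑ i ∈ F ∪ F', f i) - S) := by
    simp only [map_sub]; ring
  rw [key, sub_eq_add_neg]
  refine lt_of_le_of_lt (hna _ _) (max_lt h2 ?_)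
  rw [abv.map_neg]; exact h1

theorem hasSumTate_mul (abv : AbsoluteValue C ℝ) (hna : IsNonarch abv) {ι : Type}
    {f : ι → PowerSeries C} {S : PowerSeries C} (h : HasSumTate abv f S)
    (g : PowerSeries C) (M : ℝ) (hM : 0 ≤ M)
    (hg : ∀ a : ℕ, abv (PowerSeries.coeff a g) ≤ M) :
    HasSumTate abv (fun i => g * f i) (g * S) := by
  intro ε hε
  have hM1 : (0:ℝ) < M + 1 := by linarith
  obtain ⟨F, hF⟩ := h (ε / (M + 1)) (by positivity)
  refine ⟨F, fun G hG n => ?_⟩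
  have key : (∑ i ∈ G, g * f i) - g * S = g * ((∑ i ∈ G, f i) - S) := by
    rw [mul_sub, Finset.mul_sum]
  rw [key, PowerSeries.coeff_mul]
  have hb : abv (PowerSeries.coeff n (g * ((∑ i ∈ G, f i) - S))) < ε := by
    rw [PowerSeries.coeff_mul]
    have hle : abv (∑ q ∈ Finset.HasAntidiagonal.antidiagonal n,
        PowerSeries.coeff q.1 g * PowerSeries.coeff q.2 ((∑ i ∈ G, f i) - S))
        ≤ M * (ε / (M + 1)) := by
      refine abv_sum_le abv hna _ _ _ (by positivity) fun q _ => ?_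
      rw [abv.map_mul]
      exact mul_le_mul (hg _) (le_of_lt (hF G hG _)) (abv.nonneg _) hM
    refine lt_of_le_of_lt hle ?_
    rw [div_eq_mul_inv, ← mul_assoc]
    calc M * ε * (M + 1)⁻¹ < (M + 1) * ε * (M + 1)⁻¹ := by
          have : M * ε < (M + 1) * ε := by nlinarith
          exact mul_lt_mul_of_pos_right this (by positivity)
      _ = ε := by field_simp
  rw [PowerSeries.coeff_mul] at hb
  exact hb

end Aux
section Aux2

open Filter Polynomial

variable {C : Type} [Field C] {p : ℕ} [Fact p.Prime] [CharP C p]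

theorem poly_coeff_bound (abv : AbsoluteValue C ℝ) (Q : Polynomial C) :
    ∃ M : ℝ, 0 ≤ M ∧ ∀ a : ℕ,
      abv (PowerSeries.coeff a (↑Q : PowerSeries C)) ≤ M := by
  refine ⟨∑ a ∈ Finset.range (Q.natDegree + 1), abv (Q.coeff a),
    Finset.sum_nonneg fun a _ => abv.nonneg _, fun a => ?_⟩
  rw [Polynomial.coeff_coe]
  by_cases ha : a ≤ Q.natDegree
  · exact Finset.single_le_sum (fun i _ => abv.nonneg _)
      (Finset.mem_range.2 (by omega))
  · rw [Polynomial.coeff_eq_zero_of_natDegree_lt (by omega)]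
    simpa using Finset.sum_nonneg fun i _ => abv.nonneg (Q.coeff i)

theorem hasSumTate_equiv (abv : AbsoluteValue C ℝ) {ι ι' : Type} (e : ι' ≃ ι)
    {f : ι → PowerSeries C} {S : PowerSeries C} (h : HasSumTate abv f S) :
    HasSumTate abv (f ∘ e) S := by
  intro ε hε
  obtain ⟨F, hF⟩ := h ε hε
  refine ⟨F.map e.symm.toEmbedding, fun G hG n => ?_⟩
  have hsum : ∑ i ∈ G, (f ∘ e) i = ∑ i ∈ G.map e.toEmbedding, f i := by
    rw [Finset.sum_map]; rfl
  rw [hsum]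
  refine hF _ (fun x hx => ?_) n
  have : e.symm x ∈ G := hG (Finset.mem_map.2 ⟨x, hx, rfl⟩)
  exact Finset.mem_map.2 ⟨e.symm x, this, by simp⟩

theorem hasSumTate_sumElim (abv : AbsoluteValue C ℝ) (hna : IsNonarch abv)
    {ι ι' : Type} {f : ι → PowerSeries C} {g : ι' → PowerSeries C}
    {S T : PowerSeries C} (h : HasSumTate abv f S) (h' : HasSumTate abv g T) :
    HasSumTate abv (Sum.elim f g) (S + T) := by
  intro ε hε
  obtain ⟨F, hF⟩ := h ε hε
  obtain ⟨F', hF'⟩ := h' ε hε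
  refine ⟨F.disjSum F', fun G hG n => ?_⟩
  have hsum : ∑ i ∈ G, Sum.elim f g i =
      (∑ i ∈ G.toLeft, f i) + ∑ i ∈ G.toRight, g i := by
    conv_lhs => rw [← G.toLeft_disjSum_toRight]
    exact Finset.sum_disjSum _ _ _
  have hL : F ⊆ G.toLeft := fun x hx =>
    Finset.mem_toLeft.2 (hG (Finset.inl_mem_disjSum.2 hx))
  have hR : F' ⊆ G.toRight := fun x hx =>
    Finset.mem_toRight.2 (hG (Finset.inr_mem_disjSum.2 hx))
  have key : PowerSeries.coeff n ((∑ i ∈ G, Sum.elim f g i) - (S + T)) =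
      PowerSeries.coeff n ((∑ i ∈ G.toLeft, f i) - S) +
        PowerSeries.coeff n ((∑ i ∈ G.toRight, g i) - T) := by
    rw [hsum]; simp only [map_sub, map_add]; ring
  rw [key]
  exact lt_of_le_of_lt (hna _ _) (max_lt (hF _ hL n) (hF' _ hR n))

section Twist

variable [PerfectRing C p]

theorem twistHom_pow_cancel (p : ℕ) [Fact p.Prime] [CharP C p] [PerfectRing C p]
    (l : ℕ) (x : C) :
    (twistHom p (-(l : ℤ)) x) ^ p ^ l = x := by
  have hpow : ∀ (m : ℕ) (y : C), (frobeniusEquiv C p ^ m) y = y ^ p ^ m := by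
    intro m
    induction m with
    | zero => intro y; rw [pow_zero, pow_zero, pow_one]; rfl
    | succ k ih =>
      intro y
      have h1 : (frobeniusEquiv C p ^ (k + 1)) y =
          (frobeniusEquiv C p ^ k) (frobeniusEquiv C p y) := by
        rw [pow_succ]; rfl
      rw [h1, ih, frobeniusEquiv_apply, frobenius_def, ← pow_mul, pow_succ,
        mul_comm (p ^ k) p]
  have hmul : frobeniusEquiv C p ^ (l : ℤ) * frobeniusEquiv C p ^ (-(l : ℤ)) = 1 := by
    rw [← zpow_add, add_neg_cancel, zpow_zero]
  have key2 : (frobeniusEquiv C p ^ (l : ℤ))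
      ((frobeniusEquiv C p ^ (-(l : ℤ))) x) = x := by
    have h2 : (frobeniusEquiv C p ^ (l : ℤ) *
        frobeniusEquiv C p ^ (-(l : ℤ))) x = x := by rw [hmul]; rfl
    exact h2
  have h3 : twistHom p (-(l : ℤ)) x = (frobeniusEquiv C p ^ (-(l : ℤ))) x := rfl
  rw [h3, ← hpow l, ← zpow_natCast (frobeniusEquiv C p) l]
  exact key2

theorem twistHom_eq (p : ℕ) [Fact p.Prime] [CharP C p] [PerfectRing C p]
    (l : ℕ) {x y : C} (h : x ^ p ^ l = y) : twistHom p (-(l : ℤ)) y = x := by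
  have hinj : Function.Injective (fun z : C => z ^ p ^ l) := by
    have := (iterateFrobenius C p l).injective
    intro a b hab
    apply this
    simpa [iterateFrobenius_def] using hab
  apply hinj
  simp only []
  rw [twistHom_pow_cancel p l, h]

theorem abv_twist_lt (abv : AbsoluteValue C ℝ) (l : ℕ) (hl : 0 < l) {x : C} {ε : ℝ}
    (hε : 0 < ε) (h : abv x < ε ^ p ^ l) : abv (twistHom p (-(l : ℤ)) x) < ε := by
  by_contra hc
  push_neg at hc
  have h2 : ε ^ p ^ l ≤ abv (twistHom p (-(l : ℤ)) x) ^ p ^ l :=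
    pow_le_pow_left₀ (le_of_lt hε) hc _
  rw [← abv.map_pow, twistHom_pow_cancel p l] at h2
  exact absurd h (not_lt.2 h2)

theorem hasSumTate_twist (abv : AbsoluteValue C ℝ) (l : ℕ) (hl : 0 < l) {ι : Type}
    {f : ι → PowerSeries C} {S : PowerSeries C} (h : HasSumTate abv f S) :
    HasSumTate abv (fun i => twistPS p (-(l : ℤ)) (f i)) (twistPS p (-(l : ℤ)) S) := by
  intro ε hε
  obtain ⟨F, hF⟩ := h (ε ^ p ^ l) (by positivity)
  refine ⟨F, fun G hG n => ?_⟩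
  have key : (∑ i ∈ G, twistPS p (-(l : ℤ)) (f i)) - twistPS p (-(l : ℤ)) S =
      twistPS p (-(l : ℤ)) ((∑ i ∈ G, f i) - S) := by
    rw [map_sub, map_sum]
  rw [key]
  have hc : PowerSeries.coeff n (twistPS p (-(l : ℤ)) ((∑ i ∈ G, f i) - S)) =
      twistHom p (-(l : ℤ)) (PowerSeries.coeff n ((∑ i ∈ G, f i) - S)) := rfl
  rw [hc]
  exact abv_twist_lt abv l hl hε (hF G hG n)

theorem constantCoeff_twistPS (p : ℕ) [Fact p.Prime] [CharP C p] [PerfectRing C p]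
    (n : ℤ) (B : PowerSeries C) :
    PowerSeries.constantCoeff (twistPS p n B) =
      twistHom p n (PowerSeries.constantCoeff B) := rfl

theorem twistPS_inv (p : ℕ) [Fact p.Prime] [CharP C p] [PerfectRing C p] (n : ℤ)
    (B : PowerSeries C) : twistPS p n B⁻¹ = (twistPS p n B)⁻¹ := by
  by_cases h : PowerSeries.constantCoeff B = 0
  · rw [PowerSeries.inv_eq_zero.2 h, map_zero, eq_comm, PowerSeries.inv_eq_zero,
      constantCoeff_twistPS, h, map_zero]
  · have h2 : PowerSeries.constantCoeff (twistPS p n B) ≠ 0 := by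
      rw [constantCoeff_twistPS]
      intro hc
      exact h ((twistHom p n).injective (by rw [hc, map_zero]))
    rw [eq_comm, PowerSeries.inv_eq_iff_mul_eq_one h2, ← map_mul,
      PowerSeries.inv_mul_cancel _ h, map_one]

end Twist

end Aux2
section Aux3

open Polynomial

variable {C : Type} [Field C] {p : ℕ} [Fact p.Prime] [CharP C p]

theorem prod_Icc_shift {M : Type*} [CommMonoid M] (g : ℕ → M) (m : ℕ) :
    ∏ j ∈ Finset.Icc 1 (m + 1), g (j - 1) = g 0 * ∏ j ∈ Finset.Icc 1 m, g j := by
  induction m with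
  | zero => simp
  | succ k ih =>
    rw [Finset.prod_Icc_succ_top (by omega) (fun j => g (j - 1)), ih,
      Finset.prod_Icc_succ_top (by omega) g, Nat.add_sub_cancel, mul_assoc]

/-- Splitting off the `(t - θ)` factors: `i ↦ i + 1` on all entries, or
`i ↦ (i + 1, …, 0)`. -/
def decEquiv (d' : ℕ) : (DecTuples (d' + 1) ⊕ DecTuples d') ≃ DecTuples (d' + 1) where
  toFun x :=
    match x with
    | Sum.inl j => ⟨fun k => j.1 k + 1, fun a b hab => by
        show j.1 b + 1 < j.1 a + 1
        have := j.2 hab; omega⟩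
    | Sum.inr j => ⟨fun k => if h : (k : ℕ) < d' then j.1 ⟨k, h⟩ + 1 else 0,
        fun a b hab => by
          have hab' : (a : ℕ) < (b : ℕ) := hab
          show (if h : (b : ℕ) < d' then j.1 ⟨(b : ℕ), h⟩ + 1 else 0) <
            (if h : (a : ℕ) < d' then j.1 ⟨(a : ℕ), h⟩ + 1 else 0)
          by_cases hb : (b : ℕ) < d'
          · have ha : (a : ℕ) < d' := by omega
            rw [dif_pos hb, dif_pos ha]
            have := j.2 (show (⟨(a : ℕ), ha⟩ : Fin d') < ⟨(b : ℕ), hb⟩ from hab')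
            omega
          · have ha : (a : ℕ) < d' := by have := b.isLt; omega
            rw [dif_neg hb, dif_pos ha]
            omega⟩
  invFun i :=
    if h : i.1 (Fin.last d') = 0 then
      Sum.inr ⟨fun k => i.1 k.castSucc - 1, fun a b hab => by
        show i.1 (Fin.castSucc b) - 1 < i.1 (Fin.castSucc a) - 1
        have h1 : i.1 (Fin.castSucc b) < i.1 (Fin.castSucc a) :=
          i.2 (by simpa using hab)
        have h2 : i.1 (Fin.last d') < i.1 (Fin.castSucc b) :=
          i.2 (Fin.castSucc_lt_last b)
        omega⟩
    else
      Sum.inl ⟨fun k => i.1 k - 1, fun a b hab => by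
        show i.1 b - 1 < i.1 a - 1
        have h1 : i.1 b < i.1 a := i.2 hab
        have h2 : i.1 (Fin.last d') ≤ i.1 b := i.2.antitone (Fin.le_last b)
        omega⟩
  left_inv x := by
    match x with
    | Sum.inl j =>
      dsimp only
      rw [dif_neg (by show ¬(j.1 (Fin.last d') + 1 = 0); omega)]
      exact congrArg Sum.inl (Subtype.ext (funext fun k => by
        show j.1 k + 1 - 1 = j.1 k; omega))
    | Sum.inr j =>
      dsimp only
      rw [dif_pos (by
        show (if h : ((Fin.last d' : Fin (d' + 1)) : ℕ) < d' then
          j.1 ⟨(Fin.last d' : Fin (d' + 1)), h⟩ + 1 else 0) = 0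
        rw [dif_neg (by simp)])]
      refine congrArg Sum.inr (Subtype.ext (funext fun k => ?_))
      have hk : ((Fin.castSucc k : Fin (d' + 1)) : ℕ) < d' := k.isLt
      show (if h : ((Fin.castSucc k : Fin (d' + 1)) : ℕ) < d' then
        j.1 ⟨(Fin.castSucc k : Fin (d' + 1)), h⟩ + 1 else 0) - 1 = j.1 k
      rw [dif_pos hk]
      simp
  right_inv i := by
    dsimp only
    by_cases h : i.1 (Fin.last d') = 0
    · rw [dif_pos h]
      refine Subtype.ext (funext fun k => ?_)
      show (if hk : (k : ℕ) < d' then i.1 (Fin.castSucc ⟨(k : ℕ), hk⟩) - 1 + 1 else 0)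
        = i.1 k
      by_cases hk : (k : ℕ) < d'
      · rw [dif_pos hk]
        have hpos : i.1 (Fin.last d') < i.1 (Fin.castSucc ⟨(k : ℕ), hk⟩) :=
          i.2 (Fin.castSucc_lt_last _)
        have hke : (Fin.castSucc (⟨(k : ℕ), hk⟩ : Fin d')) = k := by
          exact Fin.ext rfl
        rw [hke] at hpos ⊢
        omega
      · rw [dif_neg hk]
        have hke : k = Fin.last d' := Fin.ext (by have := k.isLt; simp; omega)
        rw [hke, h]
    · rw [dif_neg h]
      refine Subtype.ext (funext fun k => ?_)
      show i.1 k - 1 + 1 = i.1 k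
      have h2 : i.1 (Fin.last d') ≤ i.1 k := i.2.antitone (Fin.le_last k)
      omega

theorem decEquiv_inl (d' : ℕ) (j : DecTuples (d' + 1)) :
    ((decEquiv d') (Sum.inl j)).1 = fun k => j.1 k + 1 := rfl

theorem decEquiv_inr_castSucc (d' : ℕ) (j : DecTuples d') (k : Fin d') :
    ((decEquiv d') (Sum.inr j)).1 (Fin.castSucc k) = j.1 k + 1 := by
  show (if h : ((Fin.castSucc k : Fin (d' + 1)) : ℕ) < d' then
    j.1 ⟨(Fin.castSucc k : Fin (d' + 1)), h⟩ + 1 else 0) = j.1 k + 1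
  have hk : ((Fin.castSucc k : Fin (d' + 1)) : ℕ) < d' := k.isLt
  rw [dif_pos hk]
  simp

theorem decEquiv_inr_last (d' : ℕ) (j : DecTuples d') :
    ((decEquiv d') (Sum.inr j)).1 (Fin.last d') = 0 := by
  show (if h : ((Fin.last d' : Fin (d' + 1)) : ℕ) < d' then
    j.1 ⟨(Fin.last d' : Fin (d' + 1)), h⟩ + 1 else 0) = 0
  rw [dif_neg (by simp)]

end Aux3
section Aux4

open Polynomial

variable {C : Type} [Field C] {p : ℕ} [Fact p.Prime] [CharP C p]

theorem coe_X_sub_C (θ : C) :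
    (((X - Polynomial.C θ : Polynomial C)) : PowerSeries C) =
      PowerSeries.X - PowerSeries.C θ := by
  have h := (Polynomial.coeToPowerSeries.ringHom (R := C)).map_sub X (Polynomial.C θ)
  simpa only [Polynomial.coeToPowerSeries.ringHom_apply, Polynomial.coe_X,
    Polynomial.coe_C] using h

section Twist4

variable [PerfectRing C p]

theorem twistPS_poly (p : ℕ) [Fact p.Prime] [CharP C p] [PerfectRing C p]
    (n : ℤ) (Q : Polynomial C) :
    twistPS p n (↑Q : PowerSeries C) = ↑(twistPoly p n Q) := by
  ext m
  show twistHom p n (PowerSeries.coeff m ↑Q) = PowerSeries.coeff m (↑(twistPoly p n Q) : PowerSeries C)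
  rw [Polynomial.coeff_coe, Polynomial.coeff_coe]
  show _ = (Q.map (twistHom p n)).coeff m
  rw [Polynomial.coeff_map]

theorem twistPoly_frob (p : ℕ) [Fact p.Prime] [CharP C p] [PerfectRing C p]
    (l m : ℕ) (hm : 1 ≤ m) (u : Polynomial C) :
    twistPoly p (-(l : ℤ)) (u.map (iterateFrobenius C p (m * l))) =
      u.map (iterateFrobenius C p ((m - 1) * l)) := by
  ext n
  show ((u.map (iterateFrobenius C p (m * l))).map (twistHom p (-(l : ℤ)))).coeff n = _
  rw [Polynomial.coeff_map, Polynomial.coeff_map, Polynomial.coeff_map]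
  rw [iterateFrobenius_def, iterateFrobenius_def]
  apply twistHom_eq p l
  rw [← pow_mul, ← pow_add]
  congr 1
  have hml : (m - 1) * l + l = m * l := by
    cases m with
    | zero => omega
    | succ k => simp [Nat.succ_sub_one, add_mul]
  rw [hml]

theorem twistPoly_frob_zero (p : ℕ) [Fact p.Prime] [CharP C p] [PerfectRing C p]
    (n : ℤ) (u : Polynomial C) :
    twistPoly p n (u.map (iterateFrobenius C p 0)) = twistPoly p n u := by
  congr 1
  rw [iterateFrobenius_zero, Polynomial.map_id]

theorem twistHom_theta_pow (p : ℕ) [Fact p.Prime] [CharP C p] [PerfectRing C p]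
    (θ : C) (l j : ℕ) (hj : 1 ≤ j) :
    twistHom p (-(l : ℤ)) (θ ^ (p ^ l) ^ j) = θ ^ (p ^ l) ^ (j - 1) := by
  apply twistHom_eq p l
  rw [← pow_mul, ← pow_succ]
  congr 1
  congr 1
  omega

theorem twistPS_prodP (p : ℕ) [Fact p.Prime] [CharP C p] [PerfectRing C p]
    (θ : C) (l m : ℕ) :
    twistPS p (-(l : ℤ)) (∏ j ∈ Finset.Icc 1 (m + 1),
        (PowerSeries.X - PowerSeries.C (θ ^ (p ^ l) ^ j))) =
      (PowerSeries.X - PowerSeries.C θ) *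
        ∏ j ∈ Finset.Icc 1 m, (PowerSeries.X - PowerSeries.C (θ ^ (p ^ l) ^ j)) := by
  rw [map_prod]
  have hfac : ∀ j ∈ Finset.Icc 1 (m + 1),
      twistPS p (-(l : ℤ)) (PowerSeries.X - PowerSeries.C (θ ^ (p ^ l) ^ j)) =
        PowerSeries.X - PowerSeries.C (θ ^ (p ^ l) ^ (j - 1)) := by
    intro j hj
    have hj1 : 1 ≤ j := (Finset.mem_Icc.1 hj).1
    show PowerSeries.map (twistHom p (-(l : ℤ)))
      (PowerSeries.X - PowerSeries.C (θ ^ (p ^ l) ^ j)) = _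
    rw [map_sub, PowerSeries.map_X, PowerSeries.map_C, twistHom_theta_pow p θ l j hj1]
  rw [Finset.prod_congr rfl hfac,
    prod_Icc_shift (fun j => PowerSeries.X - PowerSeries.C (θ ^ (p ^ l) ^ j)) m,
    pow_zero, pow_one]

end Twist4

end Aux4
section Aux5

open Polynomial

variable {C : Type} [Field C] {p : ℕ} [Fact p.Prime] [CharP C p] [PerfectRing C p]

theorem polylogTerm_def (θ : C) (l : ℕ) {d : ℕ} (s : Fin d → ℕ+)
    (u : Fin d → Polynomial C) (i : DecTuples d) :
    polylogTerm p θ l s u i =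
      (∏ k, (((u k).map (iterateFrobenius C p (i.1 k * l)) : Polynomial C) : PowerSeries C)) *
        ((∏ k, (∏ j ∈ Finset.Icc 1 (i.1 k),
          (PowerSeries.X - PowerSeries.C (θ ^ (p ^ l) ^ j))) ^ (s k : ℕ)))⁻¹ := rfl

theorem constCoeff_P (θ : C) (hθ : θ ≠ 0) (l m : ℕ) :
    PowerSeries.constantCoeff (∏ j ∈ Finset.Icc 1 m,
      (PowerSeries.X - PowerSeries.C (θ ^ (p ^ l) ^ j))) ≠ 0 := by
  rw [map_prod]
  rw [Finset.prod_ne_zero_iff]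
  intro j _
  rw [map_sub, PowerSeries.constantCoeff_X, PowerSeries.constantCoeff_C, zero_sub]
  exact neg_ne_zero.2 (pow_ne_zero _ hθ)

theorem constCoeff_B (θ : C) (hθ : θ ≠ 0) (l : ℕ) {d : ℕ} (s : Fin d → ℕ+)
    (f : Fin d → ℕ) :
    PowerSeries.constantCoeff (∏ k, (∏ j ∈ Finset.Icc 1 (f k),
      (PowerSeries.X - PowerSeries.C (θ ^ (p ^ l) ^ j))) ^ (s k : ℕ)) ≠ 0 := by
  rw [map_prod, Finset.prod_ne_zero_iff]
  intro k _
  rw [map_pow]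
  exact pow_ne_zero _ (constCoeff_P θ hθ l (f k))

theorem constCoeff_c_pow (θ : C) (hθ : θ ≠ 0) (W : ℕ) :
    PowerSeries.constantCoeff ((PowerSeries.X - PowerSeries.C θ) ^ W) ≠ 0 := by
  rw [map_pow, map_sub, PowerSeries.constantCoeff_X, PowerSeries.constantCoeff_C, zero_sub]
  exact pow_ne_zero _ (neg_ne_zero.2 hθ)

theorem term_left (θ : C) (hθ : θ ≠ 0) (l : ℕ)
    {d' : ℕ} (s : Fin (d' + 1) → ℕ+) (u : Fin (d' + 1) → Polynomial C)
    (j : DecTuples (d' + 1)) :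
    twistPS p (-(l : ℤ)) (polylogTerm p θ l s u ((decEquiv d') (Sum.inl j))) *
      (PowerSeries.X - PowerSeries.C θ) ^ (∑ k, (s k : ℕ)) =
    polylogTerm p θ l s u j := by
  set c : PowerSeries C := PowerSeries.X - PowerSeries.C θ with hc
  set P : ℕ → PowerSeries C := fun m => ∏ jj ∈ Finset.Icc 1 m,
    (PowerSeries.X - PowerSeries.C (θ ^ (p ^ l) ^ jj)) with hP
  rw [polylogTerm_def, polylogTerm_def, map_mul, twistPS_inv]
  have hA : twistPS p (-(l : ℤ)) (∏ k,
      (((u k).map (iterateFrobenius C p (((decEquiv d') (Sum.inl j)).1 k * l)) :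
        Polynomial C) : PowerSeries C)) =
      ∏ k, (((u k).map (iterateFrobenius C p (j.1 k * l)) : Polynomial C) :
        PowerSeries C) := by
    rw [map_prod]
    refine Finset.prod_congr rfl fun k _ => ?_
    simp only [decEquiv_inl]
    rw [twistPS_poly, twistPoly_frob p l (j.1 k + 1) (by omega) (u k),
      Nat.add_sub_cancel]
  have hB : twistPS p (-(l : ℤ)) (∏ k, (P (((decEquiv d') (Sum.inl j)).1 k)) ^ (s k : ℕ)) =
      c ^ (∑ k, (s k : ℕ)) * ∏ k, (P (j.1 k)) ^ (s k : ℕ) := by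
    rw [map_prod]
    have hfac : ∀ k ∈ Finset.univ, twistPS p (-(l : ℤ))
        ((P (((decEquiv d') (Sum.inl j)).1 k)) ^ (s k : ℕ)) =
        (c * P (j.1 k)) ^ (s k : ℕ) := by
      intro k _
      simp only [decEquiv_inl]
      rw [map_pow, hP, hc]
      rw [twistPS_prodP p θ l (j.1 k)]
    rw [Finset.prod_congr rfl hfac]
    simp only [mul_pow]
    rw [Finset.prod_mul_distrib, Finset.prod_pow_eq_pow_sum]
  rw [hA, hB, PowerSeries.mul_inv_rev]
  have hcW : PowerSeries.constantCoeff (c ^ (∑ k, (s k : ℕ))) ≠ 0 :=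
    constCoeff_c_pow θ hθ _
  calc (∏ k, (((u k).map (iterateFrobenius C p (j.1 k * l)) : Polynomial C) :
          PowerSeries C)) *
        ((∏ k, (P (j.1 k)) ^ (s k : ℕ))⁻¹ * (c ^ (∑ k, (s k : ℕ)))⁻¹) *
          c ^ (∑ k, (s k : ℕ))
      = (∏ k, (((u k).map (iterateFrobenius C p (j.1 k * l)) : Polynomial C) :
          PowerSeries C)) * (∏ k, (P (j.1 k)) ^ (s k : ℕ))⁻¹ *
          ((c ^ (∑ k, (s k : ℕ)))⁻¹ * c ^ (∑ k, (s k : ℕ))) := by ring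
    _ = _ := by rw [PowerSeries.inv_mul_cancel _ hcW, mul_one]

theorem term_right (θ : C) (hθ : θ ≠ 0) (l : ℕ)
    {d' : ℕ} (s : Fin (d' + 1) → ℕ+) (u : Fin (d' + 1) → Polynomial C)
    (j : DecTuples d') :
    twistPS p (-(l : ℤ)) (polylogTerm p θ l s u ((decEquiv d') (Sum.inr j))) *
      (PowerSeries.X - PowerSeries.C θ) ^ (∑ k, (s k : ℕ)) =
    ((twistPoly p (-(l : ℤ)) (u (Fin.last d')) : Polynomial C) : PowerSeries C) *
        (PowerSeries.X - PowerSeries.C θ) ^ (s (Fin.last d') : ℕ) *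
      polylogTerm p θ l (fun k : Fin d' => s k.castSucc)
        (fun k : Fin d' => u k.castSucc) j := by
  set c : PowerSeries C := PowerSeries.X - PowerSeries.C θ with hc
  set P : ℕ → PowerSeries C := fun m => ∏ jj ∈ Finset.Icc 1 m,
    (PowerSeries.X - PowerSeries.C (θ ^ (p ^ l) ^ jj)) with hP
  rw [polylogTerm_def, polylogTerm_def, map_mul, twistPS_inv]
  have hA : twistPS p (-(l : ℤ)) (∏ k : Fin (d' + 1),
      (((u k).map (iterateFrobenius C p (((decEquiv d') (Sum.inr j)).1 k * l)) :
        Polynomial C) : PowerSeries C)) =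
      (∏ k : Fin d', (((u k.castSucc).map (iterateFrobenius C p (j.1 k * l)) :
        Polynomial C) : PowerSeries C)) *
        ((twistPoly p (-(l : ℤ)) (u (Fin.last d')) : Polynomial C) : PowerSeries C) := by
    rw [map_prod, Fin.prod_univ_castSucc]
    congr 1
    · refine Finset.prod_congr rfl fun k _ => ?_
      rw [decEquiv_inr_castSucc]
      rw [twistPS_poly, twistPoly_frob p l (j.1 k + 1) (by omega) (u k.castSucc),
        Nat.add_sub_cancel]
    · rw [decEquiv_inr_last, zero_mul, twistPS_poly, twistPoly_frob_zero]
  have hB : twistPS p (-(l : ℤ)) (∏ k : Fin (d' + 1),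
        (P (((decEquiv d') (Sum.inr j)).1 k)) ^ (s k : ℕ)) =
      c ^ (∑ k : Fin d', (s k.castSucc : ℕ)) *
        ∏ k : Fin d', (P (j.1 k)) ^ (s k.castSucc : ℕ) := by
    rw [map_prod, Fin.prod_univ_castSucc]
    have hlast : twistPS p (-(l : ℤ))
        ((P (((decEquiv d') (Sum.inr j)).1 (Fin.last d'))) ^ (s (Fin.last d') : ℕ)) = 1 := by
      rw [decEquiv_inr_last, hP]
      have h0 : Finset.Icc 1 0 = (∅ : Finset ℕ) := Finset.Icc_eq_empty (by omega)
      simp only []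
      rw [h0, Finset.prod_empty, one_pow, map_one]
    rw [hlast, mul_one]
    have hfac : ∀ k ∈ Finset.univ, twistPS p (-(l : ℤ))
        ((P (((decEquiv d') (Sum.inr j)).1 (Fin.castSucc k))) ^ (s (Fin.castSucc k) : ℕ)) =
        (c * P (j.1 k)) ^ (s (Fin.castSucc k) : ℕ) := by
      intro k _
      rw [decEquiv_inr_castSucc, map_pow, hP, hc, twistPS_prodP p θ l (j.1 k)]
    rw [Finset.prod_congr rfl hfac]
    simp only [mul_pow]
    rw [Finset.prod_mul_distrib, Finset.prod_pow_eq_pow_sum]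
  have hW : (∑ k : Fin (d' + 1), (s k : ℕ)) =
      (∑ k : Fin d', (s k.castSucc : ℕ)) + (s (Fin.last d') : ℕ) := by
    rw [Fin.sum_univ_castSucc]
  rw [hA, hB, PowerSeries.mul_inv_rev, hW, pow_add]
  have hcW : PowerSeries.constantCoeff (c ^ (∑ k : Fin d', (s k.castSucc : ℕ))) ≠ 0 :=
    constCoeff_c_pow θ hθ _
  calc (∏ k : Fin d', (((u k.castSucc).map (iterateFrobenius C p (j.1 k * l)) :
          Polynomial C) : PowerSeries C)) *
          ((twistPoly p (-(l : ℤ)) (u (Fin.last d')) : Polynomial C) : PowerSeries C) *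
        ((∏ k : Fin d', (P (j.1 k)) ^ (s k.castSucc : ℕ))⁻¹ *
          (c ^ (∑ k : Fin d', (s k.castSucc : ℕ)))⁻¹) *
        (c ^ (∑ k : Fin d', (s k.castSucc : ℕ)) * c ^ (s (Fin.last d') : ℕ))
      = ((twistPoly p (-(l : ℤ)) (u (Fin.last d')) : Polynomial C) : PowerSeries C) *
          c ^ (s (Fin.last d') : ℕ) *
          ((∏ k : Fin d', (((u k.castSucc).map (iterateFrobenius C p (j.1 k * l)) :
            Polynomial C) : PowerSeries C)) *
            (∏ k : Fin d', (P (j.1 k)) ^ (s k.castSucc : ℕ))⁻¹) *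
          ((c ^ (∑ k : Fin d', (s k.castSucc : ℕ)))⁻¹ *
            c ^ (∑ k : Fin d', (s k.castSucc : ℕ))) := by ring
    _ = _ := by rw [PowerSeries.inv_mul_cancel _ hcW, mul_one, mul_assoc]

end Aux5
section Aux6

open Polynomial

variable {C : Type} [Field C] {p : ℕ} [Fact p.Prime] [CharP C p]

theorem twistLS_coe [PerfectRing C p] (n : ℤ) (f : PowerSeries C) :
    twistLS p n (f : LaurentSeries C) = ((twistPS p n f : PowerSeries C) : LaurentSeries C) := by
  ext g
  rw [twistLS, HahnSeries.map_coeff]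
  rw [PowerSeries.coeff_coe, PowerSeries.coeff_coe]
  split_ifs with h
  · exact map_zero _
  · rfl

theorem coe_X_sub_C_ne_zero (θ : C) :
    (((PowerSeries.X - PowerSeries.C θ : PowerSeries C)) : LaurentSeries C) ≠ 0 := by
  intro h
  have h2 : (PowerSeries.X - PowerSeries.C θ : PowerSeries C) = 0 := by
    apply HahnSeries.ofPowerSeries_injective (Γ := ℤ)
    show ((PowerSeries.X - PowerSeries.C θ : PowerSeries C) : LaurentSeries C) =
      ((0 : PowerSeries C) : LaurentSeries C)
    rw [h, PowerSeries.coe_zero]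
  have h3 := congrArg (PowerSeries.coeff 1) h2
  rw [map_sub, PowerSeries.coeff_one_X, PowerSeries.coeff_C] at h3
  simp at h3

theorem subTuple_eq {α : Type} {d' : ℕ} (s : Fin (d' + 1) → α) :
    subTuple s 0 (d' + 1 - 1) (by omega) = fun k : Fin d' => s k.castSucc := by
  funext k
  show s ⟨0 + (k : ℕ), _⟩ = s k.castSucc
  congr 1
  exact Fin.ext (by simp)

end Aux6

/-- The Frobenius difference equation of Carlitz multiple
polylogarithms, an identity in the fraction field of the Tate algebra (realized
inside the field of formal Laurent series):
`L_{l,u,s}^{(-l)} = u_d^{(-l)}·L_{l,(u_1,…,u_{d-1}),(s_1,…,s_{d-1})}/(t-θ)^{s_1+⋯+s_{d-1}} + L_{l,u,s}/(t-θ)^{s_1+⋯+s_d}`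
(the polylogarithm with empty data being `1` for `d = 1`). -/
theorem polylog_frobenius_equation
    (C : Type) [Field C] (p : ℕ) [Fact p.Prime] [CharP C p] [PerfectRing C p]
    [IsAlgClosed C] (abv : AbsoluteValue C ℝ) (θ : C)
    (hna : IsNonarch abv) (hcomplete : AbvComplete abv) (habsθ : abv θ = p)
    (l : ℕ) (hl : 0 < l) (d : ℕ) (hd : 0 < d) (s : Fin d → ℕ+) (u : Fin d → Polynomial C)
    (huK : ∀ k, CoeffsIn (Kbar θ) (u k))
    (huG : ∀ k, GaussBound p abv θ l (s k : ℕ) (u k))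
    (Ld : PowerSeries C) (hLd : IsPolylog p abv θ l s u Ld)
    (Ld' : PowerSeries C)
    (hLd' : IsPolylog p abv θ l (subTuple s 0 (d - 1) (by omega))
      (subTuple u 0 (d - 1) (by omega)) Ld') :
    twistLS p (-(l : ℤ)) (Ld : LaurentSeries C) =
      ((twistPoly p (-(l : ℤ)) (u ⟨d - 1, by omega⟩) : PowerSeries C) : LaurentSeries C) *
          (Ld' : LaurentSeries C) /
          (((PowerSeries.X - PowerSeries.C θ : PowerSeries C) : LaurentSeries C)
            ^ (∑ k : Fin d, if (k : ℕ) + 1 < d then (s k : ℕ) else 0)) +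
        (Ld : LaurentSeries C) /
          (((PowerSeries.X - PowerSeries.C θ : PowerSeries C) : LaurentSeries C)
            ^ (∑ k : Fin d, (s k : ℕ))) := by
  obtain ⟨d', rfl⟩ : ∃ d', d = d' + 1 := ⟨d - 1, by omega⟩
  have hθ : θ ≠ 0 := by
    intro h0
    rw [h0, map_zero] at habsθ
    have hp : 0 < p := (Fact.out : p.Prime).pos
    have : (0 : ℝ) < p := by exact_mod_cast hp
    rw [← habsθ] at this
    exact lt_irrefl _ this
  set c : PowerSeries C := PowerSeries.X - PowerSeries.C θ with hcdef
  set W : ℕ := ∑ k : Fin (d' + 1), (s k : ℕ) with hWdef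
  set SL : ℕ := (s (Fin.last d') : ℕ) with hSLdef
  set W' : ℕ := ∑ k : Fin d', (s k.castSucc : ℕ) with hW'def
  have hWsum : W = W' + SL := by
    rw [hWdef, hW'def, hSLdef, Fin.sum_univ_castSucc]
  -- step 1: twisted sum
  have h1 : HasSumTate abv (fun i => twistPS p (-(l : ℤ)) (polylogTerm p θ l s u i))
      (twistPS p (-(l : ℤ)) Ld) := hasSumTate_twist abv l hl hLd
  obtain ⟨M, hM0, hMb⟩ := poly_coeff_bound abv
    ((Polynomial.X - Polynomial.C θ : Polynomial C) ^ W)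
  have hcoeW : ((((Polynomial.X - Polynomial.C θ : Polynomial C) ^ W : Polynomial C)) :
      PowerSeries C) = c ^ W := by
    rw [Polynomial.coe_pow, coe_X_sub_C]
  rw [hcoeW] at hMb
  have h2 : HasSumTate abv
      (fun i => c ^ W * twistPS p (-(l : ℤ)) (polylogTerm p θ l s u i))
      (c ^ W * twistPS p (-(l : ℤ)) Ld) :=
    hasSumTate_mul abv hna h1 (c ^ W) M hM0 hMb
  -- step 2: the shorter polylog
  have h4 : HasSumTate abv (polylogTerm p θ l (fun k : Fin d' => s k.castSucc)
      (fun k : Fin d' => u k.castSucc)) Ld' := by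
    have h := hLd'
    rw [IsPolylog, subTuple_eq s, subTuple_eq u] at h
    exact h
  set gU : PowerSeries C :=
    ((twistPoly p (-(l : ℤ)) (u (Fin.last d')) : Polynomial C) : PowerSeries C) * c ^ SL
    with hgUdef
  obtain ⟨M2, hM20, hM2b⟩ := poly_coeff_bound abv
    (twistPoly p (-(l : ℤ)) (u (Fin.last d')) *
      (Polynomial.X - Polynomial.C θ : Polynomial C) ^ SL)
  have hcoeU : (((twistPoly p (-(l : ℤ)) (u (Fin.last d')) *
      (Polynomial.X - Polynomial.C θ : Polynomial C) ^ SL : Polynomial C)) :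
      PowerSeries C) = gU := by
    rw [Polynomial.coe_mul, Polynomial.coe_pow, coe_X_sub_C]
  rw [hcoeU] at hM2b
  have h5 : HasSumTate abv (fun j => gU * polylogTerm p θ l
      (fun k : Fin d' => s k.castSucc) (fun k : Fin d' => u k.castSucc) j) (gU * Ld') :=
    hasSumTate_mul abv hna h4 gU M2 hM20 hM2b
  have h6 : HasSumTate abv (Sum.elim (polylogTerm p θ l s u)
      (fun j => gU * polylogTerm p θ l (fun k : Fin d' => s k.castSucc)
        (fun k : Fin d' => u k.castSucc) j)) (Ld + gU * Ld') :=
    hasSumTate_sumElim abv hna hLd h5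
  have h7 : HasSumTate abv
      ((fun i => c ^ W * twistPS p (-(l : ℤ)) (polylogTerm p θ l s u i)) ∘ (decEquiv d'))
      (c ^ W * twistPS p (-(l : ℤ)) Ld) := hasSumTate_equiv abv (decEquiv d') h2
  have heq : ((fun i => c ^ W * twistPS p (-(l : ℤ)) (polylogTerm p θ l s u i)) ∘
      (decEquiv d')) = Sum.elim (polylogTerm p θ l s u)
      (fun j => gU * polylogTerm p θ l (fun k : Fin d' => s k.castSucc)
        (fun k : Fin d' => u k.castSucc) j) := by
    funext x
    cases x with
    | inl j =>
      show c ^ W * twistPS p (-(l : ℤ)) (polylogTerm p θ l s u ((decEquiv d') (Sum.inl j)))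
        = polylogTerm p θ l s u j
      rw [mul_comm]
      exact term_left θ hθ l s u j
    | inr j =>
      show c ^ W * twistPS p (-(l : ℤ)) (polylogTerm p θ l s u ((decEquiv d') (Sum.inr j)))
        = gU * polylogTerm p θ l (fun k : Fin d' => s k.castSucc)
          (fun k : Fin d' => u k.castSucc) j
      rw [mul_comm, hgUdef]
      exact term_right θ hθ l s u j
  rw [heq] at h7
  have star : c ^ W * twistPS p (-(l : ℤ)) Ld = Ld + gU * Ld' :=
    hasSumTate_unique abv hna h7 h6
  -- Laurent series part
  rw [twistLS_coe]
  have hb : ((c : PowerSeries C) : LaurentSeries C) ≠ 0 := coe_X_sub_C_ne_zero θ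
  have hW'goal : (∑ k : Fin (d' + 1), if (k : ℕ) + 1 < d' + 1 then (s k : ℕ) else 0)
      = W' := by
    rw [Fin.sum_univ_castSucc]
    have hlast : (if ((Fin.last d' : Fin (d' + 1)) : ℕ) + 1 < d' + 1
        then (s (Fin.last d') : ℕ) else 0) = 0 := by
      rw [if_neg (by simp)]
    rw [hlast, add_zero, hW'def]
    refine Finset.sum_congr rfl fun k _ => ?_
    rw [if_pos (by have := k.isLt; simp only [Fin.coe_castSucc]; omega)]
  have starL : ((c : PowerSeries C) : LaurentSeries C) ^ W *
      ((twistPS p (-(l : ℤ)) Ld : PowerSeries C) : LaurentSeries C) =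
      (Ld : LaurentSeries C) +
        (((twistPoly p (-(l : ℤ)) (u (Fin.last d')) : Polynomial C) : PowerSeries C) :
          LaurentSeries C) * ((c : PowerSeries C) : LaurentSeries C) ^ SL *
          (Ld' : LaurentSeries C) := by
    have h := congrArg (fun f : PowerSeries C => (f : LaurentSeries C)) star
    simp only [hgUdef, PowerSeries.coe_mul, PowerSeries.coe_add, PowerSeries.coe_pow] at h
    exact h
  have hu : (⟨d' + 1 - 1, by omega⟩ : Fin (d' + 1)) = Fin.last d' := rfl
  rw [hu, hW'goal]
  rw [hWsum, pow_add] at starL ⊢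
  field_simp
  linear_combination starL

end

end Carlitz
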